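/- Let X be a countable set, M a natural number, and let G be any real-valued function on the collection of finite multisets over X of cardinality at most M. Then there exist functions φ₂ : X → ℝ and φ₁ : ℝ → ℝ such that for every multiset S over X with card(S) ≤ M, G(S) = φ₁(Σ_{s ∈ S} φ₂(s)). (Any multiset function on a countable domain can be sum-decomposed.) -/

import Mathlib

/-- Any real-valued multiset function on a countable domain, restricted to multisets of
cardinality at most `M`, can be sum-decomposed: `G(S) = φ₁(Σ_{s ∈ S} φ₂(s))`. -/
theorem multiset_function_sum_decomposition (X : Type) [Countable X] (M : ℕ)
    (G : Multiset X → ℝ) :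
    ∃ (φ₂ : X → ℝ) (φ₁ : ℝ → ℝ), ∀ S : Multiset X, Multiset.card S ≤ M →
      G S = φ₁ ((S.map φ₂).sum) := by
  classical
  set ι := Module.Basis.ofVectorSpaceIndex ℚ ℝ with hι
  let b : Module.Basis ι ℚ ℝ := Module.Basis.ofVectorSpace ℚ ℝ
  haveI : Infinite ι := by
    rw [← not_finite_iff_infinite]
    intro hfin
    haveI : Countable ℝ := Countable.of_equiv _ b.repr.toEquiv.symm
    exact Cardinal.not_countable_real Set.countable_univ
  obtain ⟨f, hf⟩ := Countable.exists_injective_nat X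
  let e : X → ι := fun x => Infinite.natEmbedding ι (f x)
  have he : Function.Injective e :=
    (Infinite.natEmbedding ι).injective.comp hf
  set φ₂ : X → ℝ := fun x => b (e x) with hφ₂
  have hli : LinearIndependent ℚ φ₂ := b.linearIndependent.comp e he
  have hsum : ∀ S : Multiset X, ∀ A : Finset X, S.toFinset ⊆ A →
      (S.map φ₂).sum = ∑ x ∈ A, (S.count x : ℚ) • φ₂ x := by
    intro S A hA
    rw [Finset.sum_multiset_map_count]
    rw [← Finset.sum_subset hA (by
      intro x _ hx
      have : S.count x = 0 := by simpa using hx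
      simp [this])]
    exact Finset.sum_congr rfl fun x _ => (Nat.cast_smul_eq_nsmul ℚ _ _).symm
  have hinj : Function.Injective (fun S : Multiset X => (S.map φ₂).sum) := by
    intro S T h
    set A : Finset X := S.toFinset ∪ T.toFinset with hA
    have h1 := hsum S A Finset.subset_union_left
    have h2 := hsum T A Finset.subset_union_right
    have h0 : ∑ x ∈ A, ((S.count x : ℚ) - (T.count x : ℚ)) • φ₂ x = 0 := by
      simp only [sub_smul, Finset.sum_sub_distrib]
      rw [← h1, ← h2]
      rw [sub_eq_zero]; exact h
    have := linearIndependent_iff'.mp hli A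
      (fun x => (S.count x : ℚ) - (T.count x : ℚ)) h0
    ext x
    by_cases hx : x ∈ A
    · have := this x hx
      exact_mod_cast sub_eq_zero.mp this
    · have hS : S.count x = 0 := by
        apply Multiset.count_eq_zero_of_notMem
        intro hmem
        exact hx (Finset.mem_union_left _ (Multiset.mem_toFinset.mpr hmem))
      have hT : T.count x = 0 := by
        apply Multiset.count_eq_zero_of_notMem
        intro hmem
        exact hx (Finset.mem_union_right _ (Multiset.mem_toFinset.mpr hmem))
      rw [hS, hT]
  refine ⟨φ₂, G ∘ Function.invFun (fun S : Multiset X => (S.map φ₂).sum),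
    fun S _ => ?_⟩
  have := Function.leftInverse_invFun hinj S
  simp only [Function.comp_apply]
  rw [this]
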